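/- Let F be a 2-chromatic r-uniform hypergraph with q(F) > s, where q(F) is the minimum number of red vertices over all strong red-blue colorings of F (q(F)=∞ if none exists). Then the r-graph H with vertex set A ∪ B, |A| = s, |B| = n − s, whose hyperedges are all r-sets containing exactly one vertex of A, contains no copy of F and no matching of size s+1, and has s·C(n−s, r−1) hyperedges. -/

import Mathlib

open Finset

/-- `H` contains a matching of size `k`, i.e. `k` pairwise disjoint hyperedges. -/
def HasMatching {V : Type*} [DecidableEq V] (H : Finset (Finset V)) (k : ℕ) : Prop :=
  ∃ M : Finset (Finset V), M ⊆ H ∧ M.card = k ∧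
    (M : Set (Finset V)).Pairwise fun e f => Disjoint e f

/-- `H` contains a copy of `F`. -/
def ContainsCopy {α V : Type*} [DecidableEq α] [DecidableEq V]
    (F : Finset (Finset α)) (H : Finset (Finset V)) : Prop :=
  ∃ f : α → V, Function.Injective f ∧ ∀ e ∈ F, e.image f ∈ H

/-- A proper red-blue coloring of `F` (`true` = red): no hyperedge is monochromatic. -/
def ProperRB {α : Type*} (F : Finset (Finset α)) (c : α → Bool) : Prop :=
  ∀ e ∈ F, ∃ u ∈ e, ∃ v ∈ e, c u ≠ c v

/-- A strong red-blue coloring: a proper red-blue coloring in which every hyperedge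
contains exactly one red vertex. -/
def StrongRB {α : Type*} [DecidableEq α] (F : Finset (Finset α)) (c : α → Bool) : Prop :=
  ProperRB F c ∧ ∀ e ∈ F, (e.filter fun v => c v = true).card = 1

section aux

variable {s n : ℕ}

lemma filter_isLeft_eq (e : Finset (Fin s ⊕ Fin n)) :
    e.filter (fun v => v.isLeft = true) = e.toLeft.map ⟨Sum.inl, Sum.inl_injective⟩ := by
  ext x
  cases x <;> simp

lemma card_filter_isLeft (e : Finset (Fin s ⊕ Fin n)) :
    (e.filter fun v => v.isLeft = true).card = e.toLeft.card := by
  rw [filter_isLeft_eq, card_map]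

lemma card_univ_isLeft :
    ((Finset.univ : Finset (Fin s ⊕ Fin n)).filter fun v => v.isLeft = true).card = s := by
  rw [card_filter_isLeft]
  have : (Finset.univ : Finset (Fin s ⊕ Fin n)).toLeft = Finset.univ := by
    ext x; simp
  rw [this, card_univ, Fintype.card_fin]

end aux

/-- Let `F` be a 2-chromatic `r`-graph with `q(F) > s` (every strong red-blue coloring has
more than `s` red vertices).  Taking `A` of size `s` and `B` of size `n - s`, the `r`-graph
of all `r`-sets with exactly one vertex in `A` has no copy of `F`, no matching of size
`s+1`, and exactly `s·C(n-s, r-1)` hyperedges. -/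
theorem stmt_10 {α : Type*} [Fintype α] [DecidableEq α] (r s n : ℕ) (hsn : s ≤ n)
    (F : Finset (Finset α)) (hF : ∀ e ∈ F, e.card = r)
    (hchrom2 : (∃ c : α → Bool, ProperRB F c) ∧
      ¬ ∃ c : α → Fin 1, ∀ e ∈ F, ∃ u ∈ e, ∃ v ∈ e, c u ≠ c v)
    (hq : ∀ c : α → Bool, StrongRB F c → s < (Finset.univ.filter fun x => c x = true).card) :
    ¬ ContainsCopy F
      ((Finset.univ.powersetCard r).filter (fun e : Finset (Fin s ⊕ Fin (n - s)) =>
        (e.filter fun v => v.isLeft = true).card = 1)) ∧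
    ¬ HasMatching
      ((Finset.univ.powersetCard r).filter (fun e : Finset (Fin s ⊕ Fin (n - s)) =>
        (e.filter fun v => v.isLeft = true).card = 1)) (s + 1) ∧
    ((Finset.univ.powersetCard r).filter (fun e : Finset (Fin s ⊕ Fin (n - s)) =>
        (e.filter fun v => v.isLeft = true).card = 1)).card
      = s * Nat.choose (n - s) (r - 1) := by
  set H := ((Finset.univ.powersetCard r).filter (fun e : Finset (Fin s ⊕ Fin (n - s)) =>
        (e.filter fun v => v.isLeft = true).card = 1)) with hH
  -- F is nonempty
  have hFne : F.Nonempty := by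
    by_contra h
    rw [not_nonempty_iff_eq_empty] at h
    exact hchrom2.2 ⟨fun _ => 0, by simp [h]⟩
  -- every edge has card ≥ 2, hence r ≥ 2
  obtain ⟨c₀, hc₀⟩ := hchrom2.1
  have hr2 : 2 ≤ r := by
    obtain ⟨e, he⟩ := hFne
    obtain ⟨u, hu, v, hv, huv⟩ := hc₀ e he
    have : ({u, v} : Finset α) ⊆ e := by
      intro x hx; simp at hx; rcases hx with h | h <;> simp [h, hu, hv]
    have h2 : ({u, v} : Finset α).card = 2 := by
      rw [card_insert_of_notMem (by simp; intro h; exact huv (by rw [h])), card_singleton]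
    calc 2 = ({u, v} : Finset α).card := h2.symm
      _ ≤ e.card := card_le_card this
      _ = r := hF e he
  refine ⟨?_, ?_, ?_⟩
  · -- no copy
    rintro ⟨f, hf, hcopy⟩
    set c : α → Bool := fun a => (f a).isLeft with hc
    have hstrong : StrongRB F c := by
      constructor
      · intro e he
        have hmem := hcopy e he
        rw [hH, mem_filter] at hmem
        have hcard1 : (e.filter fun a => c a = true).card = 1 := by
          have := hmem.2
          rwa [Finset.filter_image, Finset.card_image_of_injective _ hf] at this
        obtain ⟨u, hu⟩ := card_eq_one.mp hcard1
        have hue : u ∈ e ∧ c u = true := by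
          have : u ∈ e.filter fun a => c a = true := hu ▸ mem_singleton_self u
          simpa using this
        -- find a blue vertex
        have hlt : (e.filter fun a => c a = true).card < e.card := by
          rw [hcard1, hF e he]; omega
        obtain ⟨v, hv, hvc⟩ : ∃ v ∈ e, ¬ (c v = true) := by
          by_contra h
          push_neg at h
          have : e.filter (fun a => c a = true) = e := filter_eq_self.mpr h
          rw [this] at hlt; omega
        exact ⟨u, hue.1, v, hv, by simp [hue.2, hvc]⟩
      · intro e he
        have hmem := hcopy e he
        rw [hH, mem_filter] at hmem
        have := hmem.2
        rwa [Finset.filter_image, Finset.card_image_of_injective _ hf] at this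
    have hlt := hq c hstrong
    have hle : (Finset.univ.filter fun x => c x = true).card ≤ s := by
      have  hinj : ((Finset.univ.filter fun x => c x = true).image f).card
          = (Finset.univ.filter fun x => c x = true).card :=
        Finset.card_image_of_injective _ hf
      have hsub : (Finset.univ.filter fun x => c x = true).image f ⊆
          (Finset.univ.filter fun v : Fin s ⊕ Fin (n - s) => v.isLeft = true) := by
        intro x hx
        simp only [mem_image, mem_filter, mem_univ, true_and] at hx ⊢
        obtain ⟨a, ha, rfl⟩ := hx
        exact ha
      calc (Finset.univ.filter fun x => c x = true).card
          = ((Finset.univ.filter fun x => c x = true).image f).card := hinj.symm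
        _ ≤ _ := card_le_card hsub
        _ = s := card_univ_isLeft
    omega
  · -- no matching
    rintro ⟨M, hMH, hMcard, hMdisj⟩
    have hdisj : ∀ e ∈ M, ∀ f ∈ M, e ≠ f →
        Disjoint (e.filter fun v => v.isLeft = true) (f.filter fun v => v.isLeft = true) := by
      intro e he f hf hef
      exact (hMdisj he hf hef).mono (filter_subset _ _) (filter_subset _ _)
    have hcardsum : (M.biUnion fun e => e.filter fun v => v.isLeft = true).card
        = ∑ e ∈ M, (e.filter fun v => v.isLeft = true).card :=
      card_biUnion hdisj
    have hone : ∀ e ∈ M, (e.filter fun v => v.isLeft = true).card = 1 := by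
      intro e he
      have := hMH he
      rw [hH, mem_filter] at this
      exact this.2
    have hsum : ∑ e ∈ M, (e.filter fun v => v.isLeft = true).card = s + 1 := by
      rw [Finset.sum_congr rfl hone, Finset.sum_const, hMcard, smul_eq_mul, mul_one]
    have hsub : (M.biUnion fun e => e.filter fun v => v.isLeft = true) ⊆
        (Finset.univ.filter fun v : Fin s ⊕ Fin (n - s) => v.isLeft = true) := by
      intro x hx
      simp only [mem_biUnion, mem_filter] at hx ⊢
      obtain ⟨e, _, _, h⟩ := hx
      exact ⟨mem_univ x, h⟩
    have := card_le_card hsub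
    rw [hcardsum, hsum, card_univ_isLeft] at this
    omega
  · -- count
    have key : H.card = ((Finset.univ.powersetCard 1 : Finset (Finset (Fin s))) ×ˢ
        (Finset.univ.powersetCard (r-1) : Finset (Finset (Fin (n-s))))).card := by
      apply Finset.card_nbij' (fun e => (e.toLeft, e.toRight))
        (fun p => p.1.disjSum p.2)
      · intro e he
        rw [hH, mem_coe, mem_filter, mem_powersetCard_univ] at he
        obtain ⟨hcr, h1⟩ := he
        rw [card_filter_isLeft] at h1
        rw [mem_coe, mem_product, mem_powersetCard_univ, mem_powersetCard_univ]
        show e.toLeft.card = 1 ∧ e.toRight.card = r - 1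
        have h2 := e.card_toLeft_add_card_toRight
        exact ⟨h1, by omega⟩
      · intro p hp
        rw [mem_coe, mem_product, mem_powersetCard_univ, mem_powersetCard_univ] at hp
        rw [hH, mem_coe, mem_filter, mem_powersetCard_univ]
        constructor
        · rw [card_disjSum, hp.1, hp.2]; omega
        · rw [card_filter_isLeft, toLeft_disjSum, hp.1]
      · intro e _ 
        exact e.toLeft_disjSum_toRight
      · intro p _
        simp
    rw [key, card_product, card_powersetCard, card_powersetCard, card_univ, card_univ,
      Fintype.card_fin, Fintype.card_fin, Nat.choose_one_right]
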